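/- Suppose the greedy algorithm for maximum coverage selects, over k iterations, sets S_0 = ∅ ⊂ S_1 ⊂ … ⊂ S_k, where at each step the chosen node maximizes the estimated spread ξ, and suppose every estimate satisfies |ξ(S') − I(S')| ≤ (ε/(2k))·OPT for all sets S' considered. If f = I is monotone submodular with optimum OPT over size-k sets, then I(S_k) ≥ (1 − 1/e − ε)·OPT. -/

import Mathlib

lemma marginal_sum_aux {V : Type*} [DecidableEq V]
    (I : Finset V → ℝ)
    (hsub : ∀ (A B : Finset V) (v : V), A ⊆ B →
      I (insert v B) - I B ≤ I (insert v A) - I A) :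
    ∀ (T A : Finset V), I (A ∪ T) - I A ≤ ∑ v ∈ T, (I (insert v A) - I A) := by
  intro T
  induction T using Finset.induction_on with
  | empty => intro A; simp
  | @insert v T' hv ih =>
    intro A
    rw [Finset.sum_insert hv, Finset.union_insert]
    have h1 := hsub A (A ∪ T') v Finset.subset_union_left
    have h2 := ih A
    linarith

/-- Deterministic statement underlying Lemma 9 of Tang–Xiao–Shi: noisy greedy on a monotone
submodular function `I` with `I ∅ = 0`, where at each of the `k` steps the node maximizing
the noisy estimate `ξ` is added, and every estimate satisfies
`|ξ(S') - I(S')| ≤ (ε/(2k))·OPT`, achieves `I(S_k) ≥ (1 - 1/e - ε)·OPT`, where `OPT` is the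
maximum of `I` over size-`k` sets. -/
theorem noisy_greedy_submodular_approx
    {V : Type*} [DecidableEq V] [Fintype V]
    (I : Finset V → ℝ) (k : ℕ) (hk : 1 ≤ k)
    (hmono : ∀ A B : Finset V, A ⊆ B → I A ≤ I B)
    (hI0 : I ∅ = 0)
    (hsub : ∀ (A B : Finset V) (v : V), A ⊆ B →
      I (insert v B) - I B ≤ I (insert v A) - I A)
    (OPT : ℝ) (hOPT : IsGreatest (I '' {S : Finset V | S.card = k}) OPT)
    (ε : ℝ) (hε0 : 0 < ε) (hε1 : ε < 1)
    (ξ : Finset V → ℝ)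
    (hξ : ∀ S : Finset V, |ξ S - I S| ≤ ε / (2 * k) * OPT)
    (S : ℕ → Finset V) (hS0 : S 0 = ∅)
    (hstep : ∀ i, 1 ≤ i → i ≤ k → ∃ v : V,
      S i = insert v (S (i - 1)) ∧
      ∀ u : V, ξ (insert u (S (i - 1))) ≤ ξ (insert v (S (i - 1)))) :
    (1 - 1 / Real.exp 1 - ε) * OPT ≤ I (S k) := by
  obtain ⟨⟨Sstar, hScard, hSval⟩, _⟩ := hOPT
  simp only [Set.mem_setOf_eq] at hScard
  have hkpos : (0 : ℝ) < k := by positivity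
  have hOPT0 : 0 ≤ OPT := by
    rw [← hSval]
    have := hmono ∅ Sstar (Finset.empty_subset _)
    linarith [hI0 ▸ this]
  have hSstarne : Sstar.Nonempty := by
    rw [← Finset.card_pos, hScard]; exact hk
  -- existence of good marginal element
  have hgood : ∀ A : Finset V, ∃ w : V,
      (OPT - I A) / k ≤ I (insert w A) - I A := by
    intro A
    by_contra h
    push_neg at h
    have hsum : ∑ v ∈ Sstar, (I (insert v A) - I A) < ∑ v ∈ Sstar, (OPT - I A) / k := by
      apply Finset.sum_lt_sum_of_nonempty hSstarne
      intro v _; exact h v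
    have htel := marginal_sum_aux I hsub Sstar A
    have hmono2 : OPT ≤ I (A ∪ Sstar) := by
      rw [← hSval]; exact hmono _ _ Finset.subset_union_right
    rw [Finset.sum_const, hScard, nsmul_eq_mul] at hsum
    rw [mul_div_cancel₀ _ (ne_of_gt hkpos)] at hsum
    linarith
  set c : ℝ := ε / (2 * k) * OPT with hc
  have hc0 : 0 ≤ c := by positivity
  -- per-step inequality
  have hstep' : ∀ i, i < k →
      OPT - I (S (i + 1)) ≤ (1 - 1 / k) * (OPT - I (S i)) + 2 * c := by
    intro i hik
    obtain ⟨v, hSv, hvmax⟩ := hstep (i + 1) (Nat.le_add_left 1 i) hik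
    simp only [Nat.add_sub_cancel] at hSv hvmax
    obtain ⟨w, hw⟩ := hgood (S i)
    have h1 := hξ (insert v (S i))
    have h2 := hξ (insert w (S i))
    rw [abs_le] at h1 h2
    have hv := hvmax w
    have : I (S i) + (OPT - I (S i)) / k - 2 * c ≤ I (S (i + 1)) := by
      rw [hSv]
      have : I (insert w (S i)) - 2 * c ≤ I (insert v (S i)) := by linarith
      linarith
    have hdiv : (OPT - I (S i)) / k = (1 / k) * (OPT - I (S i)) := by ring
    rw [hdiv] at this
    linarith
  -- induction
  have hind : ∀ i, i ≤ k →
      OPT - I (S i) ≤ (1 - 1 / k) ^ i * OPT + i * (2 * c) := by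
    intro i
    induction i with
    | zero => intro _; simp [hS0, hI0]
    | succ n ih =>
      intro hnk
      have hn : n < k := hnk
      have h1 := hstep' n hn
      have h2 := ih (le_of_lt hn)
      have hfac : (0:ℝ) ≤ 1 - 1 / k := by
        have : (1:ℝ) / k ≤ 1 := by
          rw [div_le_one hkpos]; exact_mod_cast hk
        linarith
      have hfac1 : (1:ℝ) - 1 / k ≤ 1 := by
        have : (0:ℝ) ≤ 1 / k := by positivity
        linarith
      have h3 : (1 - 1 / k) * (OPT - I (S n)) ≤
          (1 - 1 / k) * ((1 - 1 / k) ^ n * OPT + n * (2 * c)) :=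
        mul_le_mul_of_nonneg_left h2 hfac
      have h4 : (1 - 1 / k) * ((1 - 1 / k) ^ n * OPT + n * (2 * c)) ≤
          (1 - 1 / k) ^ (n + 1) * OPT + n * (2 * c) := by
        rw [pow_succ]
        have : (1 - 1 / k) * ((n : ℝ) * (2 * c)) ≤ (n : ℝ) * (2 * c) := by
          apply mul_le_of_le_one_left _ hfac1
          positivity
        nlinarith
      push_cast
      linarith
  have hfinal := hind k le_rfl
  have hkc : (k : ℝ) * (2 * c) = ε * OPT := by
    rw [hc]; field_simp
  rw [hkc] at hfinal
  -- (1 - 1/k)^k ≤ 1 / e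
  have hexp : (1 - 1 / (k:ℝ)) ^ k ≤ 1 / Real.exp 1 := by
    have h1 : (1:ℝ) - 1 / k ≤ Real.exp (-(1 / k)) := by
      have := Real.add_one_le_exp (-(1 / (k:ℝ)))
      linarith
    have hfac : (0:ℝ) ≤ 1 - 1 / k := by
      have : (1:ℝ) / k ≤ 1 := by
        rw [div_le_one hkpos]; exact_mod_cast hk
      linarith
    calc (1 - 1 / (k:ℝ)) ^ k ≤ (Real.exp (-(1 / k))) ^ k :=
          pow_le_pow_left₀ hfac h1 k
      _ = Real.exp ((k:ℝ) * (-(1 / k))) := by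
          rw [← Real.exp_nat_mul]
      _ = Real.exp (-1) := by
          congr 1
          field_simp
      _ = 1 / Real.exp 1 := by
          rw [Real.exp_neg]; ring
  have hpow : (1 - 1 / (k:ℝ)) ^ k * OPT ≤ (1 / Real.exp 1) * OPT :=
    mul_le_mul_of_nonneg_right hexp hOPT0
  nlinarith
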